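/- In the setting of the two reduction orders of R·S·T, prove that e_p = l_p for all 2 ≤ p ≤ n, where E comes from the left-first reduction (S·T = A·B, R·A = C·D, D·B = E·F) and L from the right-first reduction (R·S = G·H, H·T = I·J, G·I = K·L). -/
import Mathlib


open Finset

/-- Partial sum `Φ_p = φ_1 + ⋯ + φ_p` of a multiplicity vector. -/
def PS (f : ℕ → ℕ) (p : ℕ) : ℕ := ∑ i ∈ Finset.Icc 1 p, f i

/-- Partial sums `X_p` of the bumped row in the vector insertion `W·Z = X·Y`:
`X_0 = X_1 = 0`, `X_{p+1} = min(Z_p, X_p + w_{p+1})`. -/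
def capX (W Z : ℕ → ℕ) : ℕ → ℕ
  | 0 => 0
  | p + 1 => if p = 0 then 0 else min (PS Z p) (capX W Z p + W (p + 1))

/-- Component `x_p = X_p - X_{p-1} = min(Z_{p-1} - X_{p-1}, w_p)` (with `x_1 = 0`). -/
def xcomp (W Z : ℕ → ℕ) (p : ℕ) : ℕ := capX W Z p - capX W Z (p - 1)

/-- Component `y_q = w_q + z_q - x_q`. -/
def ycomp (W Z : ℕ → ℕ) (q : ℕ) : ℕ := W q + Z q - xcomp W Z q

/-- `A` from `S·T = A·B`. -/
def rowA (S T : ℕ → ℕ) : ℕ → ℕ := xcomp S T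
/-- `B` from `S·T = A·B`. -/
def rowB (S T : ℕ → ℕ) : ℕ → ℕ := ycomp S T
/-- `C` from `R·A = C·D`. -/
def rowC (R S T : ℕ → ℕ) : ℕ → ℕ := xcomp R (rowA S T)
/-- `D` from `R·A = C·D`. -/
def rowD (R S T : ℕ → ℕ) : ℕ → ℕ := ycomp R (rowA S T)
/-- `E` from `D·B = E·F`. -/
def rowE (R S T : ℕ → ℕ) : ℕ → ℕ := xcomp (rowD R S T) (rowB S T)
/-- `F` from `D·B = E·F`. -/
def rowF (R S T : ℕ → ℕ) : ℕ → ℕ := ycomp (rowD R S T) (rowB S T)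
/-- `G` from `R·S = G·H`. -/
def rowG (R S : ℕ → ℕ) : ℕ → ℕ := xcomp R S
/-- `H` from `R·S = G·H`. -/
def rowH (R S : ℕ → ℕ) : ℕ → ℕ := ycomp R S
/-- `I` from `H·T = I·J`. -/
def rowI (R S T : ℕ → ℕ) : ℕ → ℕ := xcomp (rowH R S) T
/-- `J` from `H·T = I·J`. -/
def rowJ (R S T : ℕ → ℕ) : ℕ → ℕ := ycomp (rowH R S) T
/-- `K` from `G·I = K·L`. -/
def rowK (R S T : ℕ → ℕ) : ℕ → ℕ := xcomp (rowG R S) (rowI R S T)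
/-- `L` from `G·I = K·L`. -/
def rowL (R S T : ℕ → ℕ) : ℕ → ℕ := ycomp (rowG R S) (rowI R S T)

lemma PS_zero (f : ℕ → ℕ) : PS f 0 = 0 := by simp [PS]

lemma PS_succ (f : ℕ → ℕ) (p : ℕ) : PS f (p + 1) = PS f p + f (p + 1) := by
  unfold PS
  rw [Finset.sum_Icc_succ_top (Nat.succ_le_succ (Nat.zero_le p))]

lemma capX_succ_eq (W Z : ℕ → ℕ) (p : ℕ) (hp : p ≠ 0) :
    capX W Z (p + 1) = min (PS Z p) (capX W Z p + W (p + 1)) := by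
  simp [capX, hp]

lemma capX_le_PS (W Z : ℕ → ℕ) : ∀ p, capX W Z p ≤ PS Z p
  | 0 => by simp [capX, PS_zero]
  | p + 1 => by
    rcases Nat.eq_zero_or_pos p with h | h
    · subst h; simp [capX]
    · rw [capX_succ_eq W Z p (by omega)]
      have := PS_succ Z p
      omega

lemma capX_mono (W Z : ℕ → ℕ) (p : ℕ) : capX W Z p ≤ capX W Z (p + 1) := by
  rcases Nat.eq_zero_or_pos p with h | h
  · subst h; simp [capX]
  · rw [capX_succ_eq W Z p (by omega)]
    have h1 := capX_le_PS W Z p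
    omega

lemma capX_step_le (W Z : ℕ → ℕ) (p : ℕ) : capX W Z (p + 1) ≤ capX W Z p + W (p + 1) := by
  rcases Nat.eq_zero_or_pos p with h | h
  · subst h; simp [capX]
  · rw [capX_succ_eq W Z p (by omega)]; omega

lemma xcomp_succ (W Z : ℕ → ℕ) (p : ℕ) :
    xcomp W Z (p + 1) = capX W Z (p + 1) - capX W Z p := by
  simp [xcomp]

lemma PS_xcomp (W Z : ℕ → ℕ) : ∀ p, PS (xcomp W Z) p = capX W Z p
  | 0 => by simp [capX, PS_zero]
  | p + 1 => by
    have ih := PS_xcomp W Z p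
    have h1 := capX_mono W Z p
    have h2 := PS_succ (xcomp W Z) p
    rw [xcomp_succ] at h2
    omega

lemma PS_ycomp (W Z : ℕ → ℕ) : ∀ p, PS (ycomp W Z) p + capX W Z p = PS W p + PS Z p
  | 0 => by simp [capX, PS_zero]
  | p + 1 => by
    have ih := PS_ycomp W Z p
    have h1 := capX_mono W Z p
    have h2 := capX_step_le W Z p
    have h3 := PS_succ (ycomp W Z) p
    have h4 := PS_succ W p
    have h5 := PS_succ Z p
    have h6 : ycomp W Z (p + 1)
        = W (p + 1) + Z (p + 1) - (capX W Z (p + 1) - capX W Z p) := by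
      rw [ycomp, xcomp_succ]
    omega

set_option maxHeartbeats 1000000 in
lemma step_arith {A A' G G' C C' I I' K K' E E' Sp Sp' Tp Tp' Bp r s t : ℕ}
    (hA : A' = min Tp (A + s))
    (hG : G' = min Sp (G + r))
    (hC : C' = min A (C + r))
    (hI : I' = min Tp (I + (r + s - (G' - G))))
    (hK : K' = min I (K + (G' - G)))
    (hE : E' = min Bp (E + (r + (A' - A) - (C' - C))))
    (hBp : Bp + A = Sp + Tp)
    (hS : Sp' = Sp + s) (hT : Tp' = Tp + t)
    (i1 : C = K) (i2 : A ≤ I) (i3 : G + A ≤ Sp + C)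
    (i4 : G + A < Sp + C → A = I)
    (i5 : E + K = G + I)
    (i6 : A ≤ Tp) (i7 : G ≤ Sp) (i8 : K ≤ I) (i9 : C ≤ A)
    (i10 : E + A ≤ Sp + Tp) (i11 : I ≤ Tp) :
    C' = K' ∧ A' ≤ I' ∧ G' + A' ≤ Sp' + C' ∧
    (G' + A' < Sp' + C' → A' = I') ∧ E' + K' = G' + I' ∧
    A' ≤ Tp' ∧ G' ≤ Sp' ∧ K' ≤ I' ∧ C' ≤ A' ∧ E' + A' ≤ Sp' + Tp' ∧ I' ≤ Tp' := by
  subst hS hT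
  simp only [Nat.min_def] at hA hG hC hI hK hE
  split_ifs at hA hG hC hI hK hE <;> subst hA hG hC hI hK hE <;> omega

set_option maxHeartbeats 2000000 in
lemma invariant (R S T : ℕ → ℕ) : ∀ p, 1 ≤ p →
    capX R (rowA S T) p = capX (rowG R S) (rowI R S T) p ∧
    capX S T p ≤ capX (rowH R S) T p ∧
    capX R S p + capX S T p ≤ PS S p + capX R (rowA S T) p ∧
    (capX R S p + capX S T p < PS S p + capX R (rowA S T) p →
      capX S T p = capX (rowH R S) T p) ∧
    capX (rowD R S T) (rowB S T) p + capX (rowG R S) (rowI R S T) p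
      = capX R S p + capX (rowH R S) T p ∧
    capX S T p ≤ PS T p ∧
    capX R S p ≤ PS S p ∧
    capX (rowG R S) (rowI R S T) p ≤ capX (rowH R S) T p ∧
    capX R (rowA S T) p ≤ capX S T p ∧
    capX (rowD R S T) (rowB S T) p + capX S T p ≤ PS S p + PS T p ∧
    capX (rowH R S) T p ≤ PS T p := by
  intro p hp
  induction p, hp using Nat.le_induction with
  | base => simp [capX]
  | succ p hp ih =>
    have hp0 : p ≠ 0 := by omega
    have hA := capX_succ_eq S T p hp0
    have hG := capX_succ_eq R S p hp0
    have hC := capX_succ_eq R (rowA S T) p hp0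
    have hC' : PS (rowA S T) p = capX S T p := PS_xcomp S T p
    have hI := capX_succ_eq (rowH R S) T p hp0
    have hI2 : rowH R S (p + 1)
        = R (p + 1) + S (p + 1) - (capX R S (p + 1) - capX R S p) := by
      rw [rowH, ycomp, xcomp_succ]
    have hK := capX_succ_eq (rowG R S) (rowI R S T) p hp0
    have hK1 : PS (rowI R S T) p = capX (rowH R S) T p := PS_xcomp (rowH R S) T p
    have hK2 : rowG R S (p + 1) = capX R S (p + 1) - capX R S p := xcomp_succ R S p
    have hE := capX_succ_eq (rowD R S T) (rowB S T) p hp0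
    have hE1 : PS (rowB S T) p + capX S T p = PS S p + PS T p := PS_ycomp S T p
    have hE2 : rowD R S T (p + 1)
        = R (p + 1) + (capX S T (p + 1) - capX S T p)
          - (capX R (rowA S T) (p + 1) - capX R (rowA S T) p) := by
      simp only [rowD, ycomp, rowA, xcomp_succ]
    have hS := PS_succ S p
    have hT := PS_succ T p
    rw [hK2] at hK
    rw [hI2] at hI
    rw [hE2] at hE
    rw [hC'] at hC
    rw [hK1] at hK
    obtain ⟨i1, i2, i3, i4, i5, i6, i7, i8, i9, i10, i11⟩ := ih
    exact step_arith hA hG hC hI hK hE hE1 hS hT i1 i2 i3 i4 i5 i6 i7 i8 i9 i10 i11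

/-- The middle rows of the two reductions of `R·S·T` agree:
`e_p = l_p` for all `2 ≤ p ≤ n`. -/
theorem e_eq_l (n : ℕ) (R S T : ℕ → ℕ) :
    ∀ p, 2 ≤ p → p ≤ n → rowE R S T p = rowL R S T p := by
  intro p h2 _
  obtain ⟨q, rfl⟩ : ∃ q, p = q + 1 := ⟨p - 1, by omega⟩
  have hq : 1 ≤ q := by omega
  obtain ⟨i1, i2, i3, i4, i5, i6, i7, i8, i9, i10, i11⟩ := invariant R S T q hq
  obtain ⟨j1, j2, j3, j4, j5, j6, j7, j8, j9, j10, j11⟩ := invariant R S T (q + 1) (by omega)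
  have e1 : rowE R S T (q + 1)
      = capX (rowD R S T) (rowB S T) (q + 1) - capX (rowD R S T) (rowB S T) q :=
    xcomp_succ _ _ q
  have l1 : rowL R S T (q + 1)
      = rowG R S (q + 1) + rowI R S T (q + 1) - rowK R S T (q + 1) := rfl
  have g1 : rowG R S (q + 1) = capX R S (q + 1) - capX R S q := xcomp_succ _ _ q
  have i1' : rowI R S T (q + 1)
      = capX (rowH R S) T (q + 1) - capX (rowH R S) T q := xcomp_succ _ _ q
  have k1 : rowK R S T (q + 1)
      = capX (rowG R S) (rowI R S T) (q + 1) - capX (rowG R S) (rowI R S T) q :=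
    xcomp_succ _ _ q
  have mE := capX_mono (rowD R S T) (rowB S T) q
  have mG := capX_mono R S q
  have mI := capX_mono (rowH R S) T q
  have mK := capX_mono (rowG R S) (rowI R S T) q
  have sK := capX_step_le (rowG R S) (rowI R S T) q
  rw [g1] at sK
  rw [l1, g1, i1', k1, e1]
  omega
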